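/- Let T = (S, Σ, κ) be a stochastic transition system, B ∈ Σ, and μ an initial probability distribution on (S, Σ). For every n ∈ ℕ, with p^Yes_n = Prob_μ(F^{≤n} B) and p^No_n = Prob_μ((S ∖ B) U^{≤n} B̃), we have p^Yes_n ≤ Prob_μ(F B) ≤ 1 − p^No_n. -/

import Mathlib

open MeasureTheory ProbabilityTheory Filter Set ENNReal

set_option linter.unusedSectionVars false

namespace STS

variable {S : Type*} [MeasurableSpace S]

/-- The finite-dimensional distributions of the Markov chain with initial distribution `μ`
and transition kernel `κ`: `finDist κ μ n` is the joint law of the first `n+1` states. -/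
noncomputable def finDist (κ : Kernel S S) (μ : Measure S) : (n : ℕ) → Measure (Fin (n + 1) → S)
  | 0 => μ.map (fun s => fun _ => s)
  | n + 1 => (finDist κ μ n).bind (fun x => (κ (x (Fin.last n))).map (Fin.snoc x))

/-- `P` assigns to each initial probability distribution `μ` the probability measure `Prob_μ`
on the space of runs `ℕ → S` (given by the Ionescu–Tulcea theorem), i.e. the unique probability
measure under which the coordinate process is a Markov chain with initial distribution `μ` and
transition kernel `κ`.  This is characterized by the finite-dimensional distributions. -/
def IsMarkovMeasureFamily (κ : Kernel S S) (P : Measure S → Measure (ℕ → S)) : Prop :=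
  ∀ μ : Measure S, IsProbabilityMeasure μ →
    IsProbabilityMeasure (P μ) ∧
    ∀ n : ℕ, (P μ).map (fun ω (i : Fin (n + 1)) => ω i.1) = finDist κ μ n

/-- `F B`: the set of runs that visit `B` at some point. -/
def FEv (B : Set S) : Set (ℕ → S) := {ω | ∃ k, ω k ∈ B}

/-- `F^{≤n} B`: the set of runs that visit `B` within `n` steps. -/
def FLe (n : ℕ) (B : Set S) : Set (ℕ → S) := {ω | ∃ k ≤ n, ω k ∈ B}

/-- `B' U B`: runs that stay in `B'` until a first visit to `B`. -/
def Until (B' B : Set S) : Set (ℕ → S) := {ω | ∃ k, ω k ∈ B ∧ ∀ j < k, ω j ∈ B'}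

/-- `B' U^{≤n} B`: runs that stay in `B'` until a first visit to `B`, within `n` steps. -/
def UntilLe (n : ℕ) (B' B : Set S) : Set (ℕ → S) :=
  {ω | ∃ k ≤ n, ω k ∈ B ∧ ∀ j < k, ω j ∈ B'}

/-- `G B`: runs that always stay in `B`. -/
def Glob (B : Set S) : Set (ℕ → S) := {ω | ∀ k, ω k ∈ B}

/-- `GF B`: runs that visit `B` infinitely often. -/
def GlobFEv (B : Set S) : Set (ℕ → S) := {ω | ∀ n : ℕ, ∃ k ≥ n, ω k ∈ B}

/-- The avoid-set `B̃` of `B`: states from which `B` is reached with probability `0`. -/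
def avoidSet (P : Measure S → Measure (ℕ → S)) (B : Set S) : Set S :=
  {s : S | P (Measure.dirac s) (FEv B) = 0}

/-- The STS is decisive w.r.t. `B`: from any initial distribution, almost surely either `B` or
its avoid-set `B̃` is eventually visited. -/
def Decisive (P : Measure S → Measure (ℕ → S)) (B : Set S) : Prop :=
  ∀ μ : Measure S, IsProbabilityMeasure μ → P μ (FEv B ∪ FEv (avoidSet P B)) = 1

/-- `A` is an attractor: it is reached almost surely from any initial distribution. -/
def IsAttractor (P : Measure S → Measure (ℕ → S)) (A : Set S) : Prop :=
  ∀ μ : Measure S, IsProbabilityMeasure μ → P μ (FEv A) = 1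

section Aux

variable (κ : Kernel S S) [IsMarkovKernel κ]

/-- the one-step extension map -/
noncomputable def step (n : ℕ) : (Fin (n + 1) → S) → Measure (Fin (n + 2) → S) :=
  fun x => (κ (x (Fin.last n))).map (Fin.snoc x)

omit [IsMarkovKernel κ] in
lemma finDist_succ (μ : Measure S) (n : ℕ) :
    finDist κ μ (n + 1) = (finDist κ μ n).bind (step κ n) := rfl

omit [IsMarkovKernel κ] in
lemma measurable_snoc_uncurry (n : ℕ) :
    Measurable (fun p : (Fin (n + 1) → S) × S => (Fin.snoc p.1 p.2 : Fin (n + 2) → S)) := by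
  refine measurable_pi_lambda _ (fun i => ?_)
  induction i using Fin.lastCases with
  | last => simp only [Fin.snoc_last]; exact measurable_snd
  | cast j => simp only [Fin.snoc_castSucc]; exact (measurable_pi_apply j).comp measurable_fst

omit [IsMarkovKernel κ] in
lemma measurable_snoc (n : ℕ) (x : Fin (n + 1) → S) :
    Measurable (fun s => (Fin.snoc x s : Fin (n + 2) → S)) :=
  (measurable_snoc_uncurry n).comp (measurable_prodMk_left (x := x))

lemma measurable_step (n : ℕ) : Measurable (step κ n) := by
  apply Measure.measurable_of_measurable_coe
  intro A hA
  have h1 : ∀ x : Fin (n + 1) → S, step κ n x A = κ (x (Fin.last n))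
      (Prod.mk x ⁻¹' ((fun p : (Fin (n + 1) → S) × S => (Fin.snoc p.1 p.2 : Fin (n + 2) → S)) ⁻¹' A)) := by
    intro x
    rw [step, Measure.map_apply (measurable_snoc n x) hA]
    rfl
  simp only [h1]
  exact Kernel.measurable_kernel_prodMk_left_of_finite
    (κ := κ.comap (fun x : Fin (n + 1) → S => x (Fin.last n)) (measurable_pi_apply _))
    ((measurable_snoc_uncurry n) hA) (fun a => by infer_instance)

lemma isProb_finDist (μ : Measure S) [IsProbabilityMeasure μ] (n : ℕ) :
    IsProbabilityMeasure (finDist κ μ n) := by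
  induction n with
  | zero =>
    exact Measure.isProbabilityMeasure_map (measurable_pi_lambda _ (fun _ => measurable_id)).aemeasurable
  | succ n ih =>
    constructor
    rw [finDist_succ, Measure.bind_apply MeasurableSet.univ (measurable_step κ n).aemeasurable]
    have h1 : ∀ x : Fin (n + 1) → S, step κ n x univ = 1 := by
      intro x
      rw [step, Measure.map_apply (measurable_snoc n x) MeasurableSet.univ]
      simp
    simp only [h1, lintegral_one]
    exact ih.measure_univ

lemma measurable_finDist_dirac (n : ℕ) :
    Measurable (fun s : S => finDist κ (Measure.dirac s) n) := by
  induction n with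
  | zero =>
    have h1 : (fun s : S => finDist κ (Measure.dirac s) 0)
        = fun s => Measure.dirac (fun _ : Fin 1 => s) := by
      funext s
      exact Measure.map_dirac' (measurable_pi_lambda _ (fun _ => measurable_id)) s
    rw [h1]
    exact Measure.measurable_dirac.comp (measurable_pi_lambda _ (fun _ => measurable_id))
  | succ n ih =>
    simp only [finDist_succ]
    exact (Measure.measurable_bind' (measurable_step κ n)).comp ih

/-- the kernel `s ↦ finDist κ (dirac s) n` -/
noncomputable def fdK (n : ℕ) : Kernel S (Fin (n + 1) → S) :=
  ⟨fun s => finDist κ (Measure.dirac s) n, measurable_finDist_dirac κ n⟩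

end Aux


section Glue

lemma fin_eq {n : ℕ} (i j : Fin n) (h : i.1 = j.1) : i = j := Fin.ext h

/-- glue a prefix of length `k+1` with a suffix of length `l+1` overlapping at position `k`. -/
def glue (k l : ℕ) (x : Fin (k + 1) → S) (y : Fin (l + 1) → S) : Fin (k + l + 1) → S :=
  fun i => if h : i.1 < k then x ⟨i.1, by omega⟩ else y ⟨i.1 - k, by omega⟩

lemma glue_zero (k : ℕ) (x : Fin (k + 1) → S) :
    glue k 0 x (fun _ => x (Fin.last k)) = x := by
  funext i
  unfold glue
  split_ifs with h
  · congr 1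
  · exact congrArg x (Fin.ext (by simp only [Fin.val_last]; omega))

lemma glue_last (k l : ℕ) (x : Fin (k + 1) → S) (y : Fin (l + 1) → S) :
    glue k l x y (Fin.last (k + l)) = y (Fin.last l) := by
  unfold glue
  rw [dif_neg (by simp only [Fin.val_last]; omega)]
  exact congrArg y (Fin.ext (by simp only [Fin.val_last]; omega))

lemma glue_snoc (k l : ℕ) (x : Fin (k + 1) → S) (y : Fin (l + 1) → S) (s : S) :
    glue k (l + 1) x (Fin.snoc y s) = Fin.snoc (glue k l x y) s := by
  funext i
  induction i using Fin.lastCases with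
  | last =>
    rw [Fin.snoc_last]
    unfold glue
    rw [dif_neg (by simp only [Fin.val_last]; omega)]
    rw [show (⟨(Fin.last (k + (l + 1))).1 - k, by omega⟩ : Fin (l + 2)) = Fin.last (l + 1)
      from Fin.ext (by simp only [Fin.val_last]; omega)]
    rw [Fin.snoc_last]
  | cast j =>
    rw [Fin.snoc_castSucc]
    unfold glue
    by_cases h : j.1 < k
    · rw [dif_pos (by simpa using h), dif_pos h]
      exact congrArg x (Fin.ext (by simp))
    · rw [dif_neg (by simpa using h), dif_neg h]
      rw [show (⟨(Fin.castSucc j).1 - k, by omega⟩ : Fin (l + 2))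
          = Fin.castSucc ⟨j.1 - k, by omega⟩ from Fin.ext (by simp)]
      rw [Fin.snoc_castSucc]

lemma measurable_glue_left (k l : ℕ) (x : Fin (k + 1) → S) :
    Measurable (glue k l x) := by
  refine measurable_pi_lambda _ (fun i => ?_)
  unfold glue
  by_cases h : i.1 < k
  · simp only [dif_pos h]; exact measurable_const
  · simp only [dif_neg h]; exact measurable_pi_apply _

lemma measurable_glue_uncurry (k l : ℕ) :
    Measurable (fun p : (Fin (k + 1) → S) × (Fin (l + 1) → S) => glue k l p.1 p.2) := by
  refine measurable_pi_lambda _ (fun i => ?_)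
  unfold glue
  by_cases h : i.1 < k
  · simp only [dif_pos h]; exact (measurable_pi_apply _).comp measurable_fst
  · simp only [dif_neg h]; exact (measurable_pi_apply _).comp measurable_snd

end Glue

section Markov

variable (κ : Kernel S S) [IsMarkovKernel κ]

omit [IsMarkovKernel κ] in
lemma measure_bind_map {α β γ : Type*} [MeasurableSpace α] [MeasurableSpace β] [MeasurableSpace γ]
    (m : Measure α) {g : α → β} {f : β → Measure γ} (hg : Measurable g) (hf : Measurable f) :
    (m.map g).bind f = m.bind (fun a => f (g a)) := by
  unfold Measure.bind
  rw [Measure.map_map hf hg]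
  rfl

omit [IsMarkovKernel κ] in
lemma measure_map_bind {α β γ : Type*} [MeasurableSpace α] [MeasurableSpace β] [MeasurableSpace γ]
    (m : Measure α) {f : α → Measure β} {g : β → γ} (hf : Measurable f) (hg : Measurable g) :
    (m.bind f).map g = m.bind (fun a => (f a).map g) := by
  unfold Measure.bind
  rw [← Measure.join_map_map hg, Measure.map_map (Measure.measurable_map _ hg) hf]
  rfl

lemma measurable_glueMap (k l : ℕ) :
    Measurable (fun x : Fin (k + 1) → S =>
      (finDist κ (Measure.dirac (x (Fin.last k))) l).map (glue k l x)) := by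
  apply Measure.measurable_of_measurable_coe
  intro A hA
  have h1 : ∀ x : Fin (k + 1) → S,
      (finDist κ (Measure.dirac (x (Fin.last k))) l).map (glue k l x) A
      = ((fdK κ l).comap (fun x : Fin (k + 1) → S => x (Fin.last k)) (measurable_pi_apply _)) x
        (Prod.mk x ⁻¹' ((fun p : (Fin (k + 1) → S) × (Fin (l + 1) → S) => glue k l p.1 p.2) ⁻¹' A)) := by
    intro x
    rw [Measure.map_apply (measurable_glue_left k l x) hA]
    rfl
  simp only [h1]
  exact Kernel.measurable_kernel_prodMk_left_of_finite ((measurable_glue_uncurry k l) hA)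
    (fun x => ⟨by
      show finDist κ (Measure.dirac (x (Fin.last k))) l univ < ⊤
      rw [(isProb_finDist κ (Measure.dirac (x (Fin.last k))) l).measure_univ]
      exact one_lt_top⟩)

lemma finDist_add (μ : Measure S) [IsProbabilityMeasure μ] (k l : ℕ) :
    finDist κ μ (k + l) = (finDist κ μ k).bind
      (fun x => (finDist κ (Measure.dirac (x (Fin.last k))) l).map (glue k l x)) := by
  induction l with
  | zero =>
    have h1 : (fun x : Fin (k + 1) → S =>
        (finDist κ (Measure.dirac (x (Fin.last k))) 0).map (glue k 0 x))
        = fun x => Measure.dirac x := by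
      funext x
      show ((Measure.dirac (x (Fin.last k))).map (fun s => fun _ : Fin 1 => s)).map (glue k 0 x)
        = Measure.dirac x
      rw [Measure.map_dirac' (show Measurable (fun s : S => (fun _ : Fin 1 => s)) from
          measurable_pi_lambda _ fun _ => measurable_id),
        Measure.map_dirac' (measurable_glue_left k 0 x), glue_zero]
    rw [h1, Measure.bind_dirac]
    rfl
  | succ l ih =>
    have key : ∀ x : Fin (k + 1) → S,
        (finDist κ (Measure.dirac (x (Fin.last k))) (l + 1)).map (glue k (l + 1) x)
        = ((finDist κ (Measure.dirac (x (Fin.last k))) l).map (glue k l x)).bind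
            (step κ (k + l)) := by
      intro x
      rw [finDist_succ, measure_map_bind _ (measurable_step κ l) (measurable_glue_left k (l + 1) x),
        measure_bind_map _ (measurable_glue_left k l x) (measurable_step κ (k + l))]
      congr 1
      funext y
      show ((κ (y (Fin.last l))).map (Fin.snoc y)).map (glue k (l + 1) x)
        = (κ (glue k l x y (Fin.last (k + l)))).map (Fin.snoc (glue k l x y))
      rw [glue_last, Measure.map_map (measurable_glue_left k (l + 1) x) (measurable_snoc l y)]
      congr 1
      funext s
      exact glue_snoc k l x y s
    show (finDist κ μ (k + l)).bind (step κ (k + l)) = _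
    rw [ih, Measure.bind_bind (measurable_glueMap κ k l).aemeasurable (measurable_step κ (k + l)).aemeasurable]
    congr 1
    funext x
    rw [key]

lemma finDist_map_zero (μ : Measure S) [IsProbabilityMeasure μ] (n : ℕ) :
    (finDist κ μ n).map (fun y => y 0) = μ := by
  induction n with
  | zero =>
    show (μ.map (fun s => fun _ : Fin 1 => s)).map (fun y => y 0) = μ
    rw [Measure.map_map (measurable_pi_apply 0) (show Measurable (fun s : S => (fun _ : Fin 1 => s)) from
      measurable_pi_lambda _ fun _ => measurable_id)]
    exact Measure.map_id
  | succ n ih =>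
    rw [finDist_succ, measure_map_bind _ (measurable_step κ n) (measurable_pi_apply 0)]
    have h1 : ∀ x : Fin (n + 1) → S, (step κ n x).map (fun y => y 0)
        = Measure.dirac (x 0) := by
      intro x
      rw [step, Measure.map_map (measurable_pi_apply 0) (measurable_snoc n x)]
      have h2 : ((fun y : Fin (n + 2) → S => y 0) ∘ Fin.snoc x) = fun _ => x 0 := by
        funext s
        show (Fin.snoc x s : Fin (n + 2) → S) 0 = x 0
        rw [show (0 : Fin (n + 2)) = Fin.castSucc 0 from rfl, Fin.snoc_castSucc]
      rw [h2, Measure.map_const, measure_univ, one_smul]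
    simp only [h1]
    rw [Measure.bind_dirac_eq_map _ (measurable_pi_apply 0)]
    exact ih
end Markov

section Main

lemma measurable_proj (m : ℕ) :
    Measurable (fun ω : ℕ → S => fun i : Fin (m + 1) => ω i.1) :=
  measurable_pi_lambda _ fun _ => measurable_pi_apply _

lemma measurableSet_hitSet {B : Set S} (hB : MeasurableSet B)
    (m : ℕ) : MeasurableSet {y : Fin (m + 1) → S | ∃ j, y j ∈ B} := by
  have h : {y : Fin (m + 1) → S | ∃ j, y j ∈ B} = ⋃ j, (fun y : Fin (m + 1) → S => y j) ⁻¹' B := by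
    ext y; simp [Set.mem_iUnion]
  rw [h]
  exact MeasurableSet.iUnion fun j => measurable_pi_apply j hB

variable (κ : Kernel S S) [IsMarkovKernel κ] (P : Measure S → Measure (ℕ → S))

lemma hit_zero (hP : IsMarkovMeasureFamily κ P) {B : Set S} (hB : MeasurableSet B)
    {s : S} (hs : s ∈ avoidSet P B) (l : ℕ) :
    finDist κ (Measure.dirac s) l {y | ∃ j, y j ∈ B} = 0 := by
  obtain ⟨hprob, hmap⟩ := hP (Measure.dirac s) inferInstance
  rw [← hmap l, Measure.map_apply (measurable_proj l) (measurableSet_hitSet hB l)]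
  refine measure_mono_null ?_ hs
  rintro ω ⟨j, hj⟩
  exact ⟨j.1, hj⟩

lemma measurableSet_avoidSet (hP : IsMarkovMeasureFamily κ P) {B : Set S}
    (hB : MeasurableSet B) : MeasurableSet (avoidSet P B) := by
  have key : ∀ s : S, P (Measure.dirac s) (FEv B)
      = ⨆ m : ℕ, finDist κ (Measure.dirac s) m {y | ∃ j, y j ∈ B} := by
    intro s
    obtain ⟨hprob, hmap⟩ := hP (Measure.dirac s) inferInstance
    have h1 : FEv B = ⋃ m : ℕ,
        (fun ω : ℕ → S => fun i : Fin (m + 1) => ω i.1) ⁻¹' {y | ∃ j, y j ∈ B} := by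
      ext ω
      constructor
      · rintro ⟨k, hk⟩
        exact Set.mem_iUnion.2 ⟨k, ⟨⟨k, by omega⟩, hk⟩⟩
      · intro h
        obtain ⟨m, j, hj⟩ := Set.mem_iUnion.1 h
        exact ⟨j.1, hj⟩
    have hmono : Monotone (fun m : ℕ =>
        (fun ω : ℕ → S => fun i : Fin (m + 1) => ω i.1) ⁻¹' {y | ∃ j, y j ∈ B}) := by
      intro a b hab ω hω
      obtain ⟨j, hj⟩ := hω
      exact ⟨⟨j.1, by omega⟩, hj⟩
    rw [h1, hmono.directed_le.measure_iUnion]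
    refine iSup_congr fun m => ?_
    rw [← Measure.map_apply (measurable_proj m) (measurableSet_hitSet hB m), hmap m]
  have hmeas : Measurable fun s : S => P (Measure.dirac s) (FEv B) := by
    simp only [key]
    exact Measurable.iSup fun m =>
      (Measure.measurable_coe (measurableSet_hitSet hB m)).comp (measurable_finDist_dirac κ m)
  exact hmeas (measurableSet_singleton 0)

end Main


/-- For every `n`, `p^Yes_n ≤ Prob_μ(F B) ≤ 1 − p^No_n`. -/
theorem pYes_le_prob_le_one_sub_pNo
    (κ : Kernel S S) [IsMarkovKernel κ]
    (P : Measure S → Measure (ℕ → S)) (hP : IsMarkovMeasureFamily κ P)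
    (B : Set S) (hB : MeasurableSet B)
    (μ : Measure S) (hμ : IsProbabilityMeasure μ) (n : ℕ) :
    P μ (FLe n B) ≤ P μ (FEv B) ∧
      P μ (FEv B) ≤ 1 - P μ (UntilLe n Bᶜ (avoidSet P B)) := by
  obtain ⟨hPμ, hmap⟩ := hP μ hμ
  haveI := hPμ
  have hBt : MeasurableSet (avoidSet P B) := measurableSet_avoidSet κ P hP hB
  constructor
  · refine measure_mono fun ω hω => ?_
    obtain ⟨k, -, hk⟩ := hω
    exact ⟨k, hk⟩
  · -- measurability of the cylinder events
    have hE : ∀ k l : ℕ, MeasurableSet {x : Fin (k + l + 1) → S |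
        x ⟨k, by omega⟩ ∈ avoidSet P B ∧ ∃ j, k ≤ j.1 ∧ x j ∈ B} := by
      intro k l
      have h : {x : Fin (k + l + 1) → S |
          x ⟨k, by omega⟩ ∈ avoidSet P B ∧ ∃ j, k ≤ j.1 ∧ x j ∈ B}
          = ((fun x : Fin (k + l + 1) → S => x ⟨k, by omega⟩) ⁻¹' avoidSet P B)
            ∩ ⋃ (j : Fin (k + l + 1)) (_ : k ≤ j.1), (fun x : Fin (k + l + 1) → S => x j) ⁻¹' B := by
        ext x
        simp [Set.mem_iUnion]
      rw [h]
      exact ((measurable_pi_apply _) hBt).inter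
        (MeasurableSet.iUnion fun j => MeasurableSet.iUnion fun _ => (measurable_pi_apply j) hB)
    -- the key measure-zero computation via the Markov property
    have hE0 : ∀ k l : ℕ, finDist κ μ (k + l) {x : Fin (k + l + 1) → S |
        x ⟨k, by omega⟩ ∈ avoidSet P B ∧ ∃ j, k ≤ j.1 ∧ x j ∈ B} = 0 := by
      intro k l
      rw [finDist_add κ μ k l, Measure.bind_apply (hE k l) (measurable_glueMap κ k l).aemeasurable]
      have hint : ∀ x : Fin (k + 1) → S,
          (finDist κ (Measure.dirac (x (Fin.last k))) l).map (glue k l x)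
            {z : Fin (k + l + 1) → S |
              z ⟨k, by omega⟩ ∈ avoidSet P B ∧ ∃ j, k ≤ j.1 ∧ z j ∈ B} = 0 := by
        intro x
        rw [Measure.map_apply (measurable_glue_left k l x) (hE k l)]
        by_cases hs : x (Fin.last k) ∈ avoidSet P B
        · refine measure_mono_null ?_ (hit_zero κ P hP hB hs l)
          rintro y ⟨-, j, hkj, hj⟩
          refine ⟨⟨j.1 - k, by omega⟩, ?_⟩
          have hgl : glue k l x y j = y ⟨j.1 - k, by omega⟩ := by
            unfold glue
            rw [dif_neg (by omega)]
          rwa [hgl] at hj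
        · refine measure_mono_null (fun y hy => ?_)
            (show finDist κ (Measure.dirac (x (Fin.last k))) l
                ((fun y : Fin (l + 1) → S => y 0) ⁻¹' avoidSet P B) = 0 from ?_)
          · have hgl : glue k l x y ⟨k, by omega⟩ = y 0 := by
              unfold glue
              rw [dif_neg (by simp)]
              exact congrArg y (Fin.ext (by simp))
            refine Set.mem_preimage.2 ?_
            rw [← hgl]
            exact hy.1
          · rw [← Measure.map_apply (measurable_pi_apply 0) hBt,
              finDist_map_zero κ (Measure.dirac (x (Fin.last k))) l,
              Measure.dirac_apply' _ hBt]
            simp [hs]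
      simp only [hint]
      simp
    -- transfer to the path space
    have hD0 : ∀ k l : ℕ, P μ {ω : ℕ → S | ω k ∈ avoidSet P B
        ∧ ∃ j, k ≤ j ∧ j ≤ k + l ∧ ω j ∈ B} = 0 := by
      intro k l
      have hsets : {ω : ℕ → S | ω k ∈ avoidSet P B ∧ ∃ j, k ≤ j ∧ j ≤ k + l ∧ ω j ∈ B}
          = (fun ω : ℕ → S => fun i : Fin (k + l + 1) => ω i.1) ⁻¹'
            {x : Fin (k + l + 1) → S | x ⟨k, by omega⟩ ∈ avoidSet P B ∧ ∃ j, k ≤ j.1 ∧ x j ∈ B} := by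
        ext ω
        constructor
        · rintro ⟨h1, j, hkj, hjl, hj⟩
          exact ⟨h1, ⟨j, by omega⟩, hkj, hj⟩
        · rintro ⟨h1, j, hkj, hj⟩
          exact ⟨h1, j.1, hkj, by omega, hj⟩
      rw [hsets, ← Measure.map_apply (measurable_proj (k + l)) (hE k l), hmap (k + l), hE0 k l]
    -- the intersection has measure zero
    have hZ : P μ (FEv B ∩ UntilLe n Bᶜ (avoidSet P B)) = 0 := by
      refine measure_mono_null (fun ω hω => ?_)
        (measure_iUnion_null fun k : Fin (n + 1) =>
          measure_iUnion_null fun l : ℕ => hD0 k.1 l)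
      obtain ⟨⟨j, hj⟩, k, hkn, hkBt, hpre⟩ := hω
      have hkj : k ≤ j := by
        by_contra h
        exact (hpre j (by omega)) hj
      exact Set.mem_iUnion.2 ⟨⟨k, by omega⟩,
        Set.mem_iUnion.2 ⟨j - k, hkBt, j, hkj, by show j ≤ k + (j - k); omega, hj⟩⟩
    -- measurability of the two events
    have hUmeas : MeasurableSet (UntilLe n Bᶜ (avoidSet P B)) := by
      have h : UntilLe n Bᶜ (avoidSet P B) = ⋃ (k : ℕ) (_ : k ≤ n),
          ((fun ω : ℕ → S => ω k) ⁻¹' avoidSet P B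
            ∩ ⋂ (j : ℕ) (_ : j < k), (fun ω : ℕ → S => ω j) ⁻¹' Bᶜ) := by
        ext ω
        simp only [UntilLe, Set.mem_iUnion, Set.mem_iInter, Set.mem_inter_iff,
          Set.mem_preimage, Set.mem_setOf_eq, Set.mem_compl_iff]
        tauto
      rw [h]
      exact MeasurableSet.iUnion fun k => MeasurableSet.iUnion fun _ =>
        ((measurable_pi_apply k) hBt).inter
          (MeasurableSet.iInter fun j => MeasurableSet.iInter fun _ =>
            (measurable_pi_apply j) hB.compl)
    have hsum := measure_union_add_inter (μ := P μ) (FEv B) hUmeas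
    rw [hZ, add_zero] at hsum
    have hle : P μ (FEv B) + P μ (UntilLe n Bᶜ (avoidSet P B)) ≤ 1 := by
      rw [← hsum]
      exact prob_le_one
    exact ENNReal.le_sub_of_add_le_right (measure_ne_top _ _) hle

end STS
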